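/- Let (X,d) be a complete metric space, φ : [0,∞) → [0,∞) an altering function, and e(x,y) = φ(d(x,y)). Let a, b, c : [0,∞) → [0,∞) be functions such that ψ := a + 2b + c is strictly subunitary on (0,∞) and right Boyd-Wong on (0,∞). Suppose T : X → X satisfies e(Tx,Ty) ≤ a(d(x,y))·e(x,y) + b(d(x,y))·[e(x,Tx)+e(y,Ty)] + c(d(x,y))·min{e(x,Ty), e(Tx,y)} for all x,y ∈ X with x ≠ y. Then T is a globally strong Picard operator (modulo d): Fix(T) is a singleton {z}, and for each x ∈ X the sequence (Tⁿx; n ≥ 0) converges in (X,d) to z. -/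

import Mathlib

open Filter Topology

/-- `φ : [0,∞) → [0,∞)` is an *altering function*: continuous, increasing,
and reflexive sufficient (`φ t = 0` iff `t = 0`); it takes nonnegative values
on `[0,∞)`. (We model it as a real function restricted to `Set.Ici 0`.) -/
def IsAltering (φ : ℝ → ℝ) : Prop :=
  ContinuousOn φ (Set.Ici 0) ∧ MonotoneOn φ (Set.Ici 0) ∧
    (∀ t, 0 ≤ t → 0 ≤ φ t) ∧ (∀ t, 0 ≤ t → (φ t = 0 ↔ t = 0))

/-- The altering metric `e(x,y) = φ(d(x,y))`. -/
noncomputable def eAlt {X : Type*} [MetricSpace X] (φ : ℝ → ℝ) (x y : X) : ℝ :=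
  φ (dist x y)

/-- `M(x,y) = max{e(x,y), (1/2)[e(x,Tx)+e(y,Ty)], min{e(x,Ty), e(Tx,y)}}`. -/
noncomputable def MAlt {X : Type*} [MetricSpace X] (φ : ℝ → ℝ) (T : X → X) (x y : X) : ℝ :=
  max (max (eAlt φ x y) ((eAlt φ x (T x) + eAlt φ y (T y)) / 2))
    (min (eAlt φ x (T y)) (eAlt φ (T x) y))

/-- `ψ` is strictly subunitary on `(0,∞)`: `ψ s < 1` for all `s > 0`. -/
def StrictlySubunitary (ψ : ℝ → ℝ) : Prop := ∀ s, 0 < s → ψ s < 1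

/-- `ψ` is right Boyd–Wong on `(0,∞)`: `limsup_{t→s+} ψ(t) < 1` for all `s > 0`. -/
def RightBoydWong (ψ : ℝ → ℝ) : Prop := ∀ s, 0 < s → limsup ψ (𝓝[>] s) < 1

private lemma tendsto_phi_aux {φ : ℝ → ℝ} (hφc : ContinuousOn φ (Set.Ici 0)) {f : ℕ → ℝ} {t : ℝ}
    (ht : 0 ≤ t) (hf : Filter.Tendsto f atTop (𝓝 t)) (hf0 : ∀ n, 0 ≤ f n) :
    Filter.Tendsto (fun n => φ (f n)) atTop (𝓝 (φ t)) :=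
  (hφc.continuousWithinAt ht).tendsto.comp
    (tendsto_nhdsWithin_iff.2 ⟨hf, Filter.Eventually.of_forall hf0⟩)

section
variable {X : Type*} [MetricSpace X] {T : X → X} {φ a b c : ℝ → ℝ}

private lemma step_lemma (hφ : IsAltering φ)
    (ha : ∀ s, 0 ≤ s → 0 ≤ a s) (hb : ∀ s, 0 ≤ s → 0 ≤ b s)
    (hc : ∀ s, 0 ≤ s → 0 ≤ c s)
    (hψsub : StrictlySubunitary (fun s => a s + 2 * b s + c s))
    (hcontr : ∀ x y : X, x ≠ y →
      eAlt φ (T x) (T y) ≤ a (dist x y) * eAlt φ x y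
        + b (dist x y) * (eAlt φ x (T x) + eAlt φ y (T y))
        + c (dist x y) * min (eAlt φ x (T y)) (eAlt φ (T x) y)) (p : X) :
    dist (T p) (T (T p)) ≤ dist p (T p) ∧
      φ (dist (T p) (T (T p))) ≤
        (a (dist p (T p)) + 2 * b (dist p (T p)) + c (dist p (T p))) * φ (dist p (T p)) := by
  obtain ⟨hφc, hφm, hφ0, hφz⟩ := hφ
  have hphi0 : φ 0 = 0 := (hφz 0 le_rfl).2 rfl
  by_cases hp : p = T p
  · have h1 : T p = T (T p) := congrArg T hp
    rw [← h1, ← hp, dist_self, hphi0, mul_zero]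
    exact ⟨le_rfl, le_rfl⟩
  · set s := dist p (T p) with hs
    set t := dist (T p) (T (T p)) with hts
    have hs0 : 0 < s := dist_pos.2 hp
    have key := hcontr p (T p) hp
    simp only [eAlt, dist_self, hphi0] at key
    have hmin : min (φ (dist p (T (T p)))) (0:ℝ) = 0 :=
      min_eq_right (hφ0 _ dist_nonneg)
    rw [hmin, mul_zero, add_zero] at key
    have hψs := hψsub s hs0
    simp only at hψs
    have hA := ha s (le_of_lt hs0)
    have hB := hb s (le_of_lt hs0)
    have hC := hc s (le_of_lt hs0)
    have hts' : t ≤ s := by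
      by_contra hlt
      push_neg at hlt
      have ht0 : 0 < t := lt_trans hs0 hlt
      have hst : φ s ≤ φ t := hφm (le_of_lt hs0) (le_of_lt ht0) (le_of_lt hlt)
      have hφt : 0 < φ t := by
        rcases lt_or_eq_of_le (hφ0 t (le_of_lt ht0)) with h | h
        · exact h
        · exact absurd ((hφz t (le_of_lt ht0)).1 h.symm) (ne_of_gt ht0)
      nlinarith [mul_le_mul_of_nonneg_left hst hA, mul_le_mul_of_nonneg_left hst hB]
    refine ⟨hts', ?_⟩
    have hφts : φ t ≤ φ s := hφm dist_nonneg (le_of_lt hs0) hts'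
    have hφsnn : 0 ≤ φ s := hφ0 s (le_of_lt hs0)
    nlinarith [mul_le_mul_of_nonneg_left hφts hB]
end

section
variable {X : Type*} [MetricSpace X] {T : X → X} {φ a b c : ℝ → ℝ}

private lemma orbit_dist_tendsto_zero (hφ : IsAltering φ)
    (ha : ∀ s, 0 ≤ s → 0 ≤ a s) (hb : ∀ s, 0 ≤ s → 0 ≤ b s)
    (hc : ∀ s, 0 ≤ s → 0 ≤ c s)
    (hψsub : StrictlySubunitary (fun s => a s + 2 * b s + c s))
    (hψbw : RightBoydWong (fun s => a s + 2 * b s + c s))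
    (hcontr : ∀ x y : X, x ≠ y →
      eAlt φ (T x) (T y) ≤ a (dist x y) * eAlt φ x y
        + b (dist x y) * (eAlt φ x (T x) + eAlt φ y (T y))
        + c (dist x y) * min (eAlt φ x (T y)) (eAlt φ (T x) y)) (x : X) :
    Antitone (fun n : ℕ => dist (T^[n] x) (T^[n+1] x)) ∧
      Filter.Tendsto (fun n : ℕ => dist (T^[n] x) (T^[n+1] x)) atTop (𝓝 0) := by
  obtain ⟨hφc, hφm, hφ0, hφz⟩ := hφ
  set D : ℕ → ℝ := fun n => dist (T^[n] x) (T^[n+1] x) with hD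
  have hstep : ∀ n : ℕ, D (n+1) ≤ D n ∧
      φ (D (n+1)) ≤ (a (D n) + 2 * b (D n) + c (D n)) * φ (D n) := by
    intro n
    have := step_lemma ⟨hφc, hφm, hφ0, hφz⟩ ha hb hc hψsub hcontr (T^[n] x)
    simpa [hD, Function.iterate_succ_apply'] using this
  have hanti : Antitone D := antitone_nat_of_succ_le fun n => (hstep n).1
  have hbdd : BddBelow (Set.range D) := ⟨0, by rintro _ ⟨n, rfl⟩; exact dist_nonneg⟩
  set δ : ℝ := ⨅ n, D n with hδ
  have htend : Filter.Tendsto D atTop (𝓝 δ) := tendsto_atTop_ciInf hanti hbdd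
  have hδle : ∀ n, δ ≤ D n := fun n => ciInf_le hbdd n
  have hδ0 : 0 ≤ δ := le_ciInf fun n => dist_nonneg
  refine ⟨hanti, ?_⟩
  rcases eq_or_lt_of_le hδ0 with hδz | hδpos
  · rwa [← hδz] at htend
  exfalso
  have hφδ : 0 < φ δ := by
    rcases lt_or_eq_of_le (hφ0 δ hδ0) with h | h
    · exact h
    · exact absurd ((hφz δ hδ0).1 h.symm) (ne_of_gt hδpos)
  by_cases hhit : ∃ n, D n = δ
  · obtain ⟨n, hn⟩ := hhit
    have h1 : D (n+1) = δ := le_antisymm (hn ▸ (hstep n).1) (hδle (n+1))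
    have := (hstep n).2
    rw [hn, h1] at this
    have hψδ := hψsub δ hδpos
    simp only at hψδ
    nlinarith
  · push_neg at hhit
    have hgt : ∀ n, δ < D n := fun n => lt_of_le_of_ne (hδle n) (Ne.symm (hhit n))
    have htendI : Filter.Tendsto D atTop (𝓝[>] δ) :=
      tendsto_nhdsWithin_iff.2 ⟨htend, Filter.Eventually.of_forall hgt⟩
    have hls := hψbw δ hδpos
    set ψ := fun s => a s + 2 * b s + c s with hψ
    set K : ℝ := (limsup ψ (𝓝[>] δ) + 1) / 2 with hK
    have hK1 : K < 1 := by rw [hK]; linarith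
    have hlsK : limsup ψ (𝓝[>] δ) < K := by rw [hK]; linarith
    have hbound : IsBoundedUnder (· ≤ ·) (𝓝[>] δ) ψ := by
      refine ⟨1, ?_⟩
      rw [Filter.eventually_map]
      filter_upwards [self_mem_nhdsWithin] with t ht
      exact le_of_lt (hψsub t (lt_of_le_of_lt hδ0 ht))
    have hev : ∀ᶠ t in 𝓝[>] δ, ψ t < K := eventually_lt_of_limsup_lt hlsK hbound
    have hevn : ∀ᶠ n in atTop, ψ (D n) < K := htendI.eventually hev
    have hineq : ∀ᶠ n in atTop, φ (D (n+1)) ≤ K * φ (D n) := by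
      filter_upwards [hevn] with n hn
      calc φ (D (n+1)) ≤ ψ (D n) * φ (D n) := (hstep n).2
        _ ≤ K * φ (D n) :=
          mul_le_mul_of_nonneg_right (le_of_lt hn) (hφ0 _ dist_nonneg)
    have hl1 : Filter.Tendsto (fun n => φ (D (n+1))) atTop (𝓝 (φ δ)) :=
      tendsto_phi_aux hφc hδ0 (htend.comp (tendsto_add_atTop_nat 1)) fun n => dist_nonneg
    have hl2 : Filter.Tendsto (fun n => K * φ (D n)) atTop (𝓝 (K * φ δ)) :=
      (tendsto_phi_aux hφc hδ0 htend fun n => dist_nonneg).const_mul K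
    have : φ δ ≤ K * φ δ := le_of_tendsto_of_tendsto hl1 hl2 hineq
    nlinarith
end

section
variable {X : Type*} [MetricSpace X] {T : X → X} {φ a b c : ℝ → ℝ}

private lemma orbit_cauchy (hφ : IsAltering φ)
    (ha : ∀ s, 0 ≤ s → 0 ≤ a s) (hb : ∀ s, 0 ≤ s → 0 ≤ b s)
    (hc : ∀ s, 0 ≤ s → 0 ≤ c s)
    (hψsub : StrictlySubunitary (fun s => a s + 2 * b s + c s))
    (hψbw : RightBoydWong (fun s => a s + 2 * b s + c s))
    (hcontr : ∀ x y : X, x ≠ y →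
      eAlt φ (T x) (T y) ≤ a (dist x y) * eAlt φ x y
        + b (dist x y) * (eAlt φ x (T x) + eAlt φ y (T y))
        + c (dist x y) * min (eAlt φ x (T y)) (eAlt φ (T x) y)) (x : X) :
    CauchySeq (fun n : ℕ => T^[n] x) := by
  obtain ⟨hφc, hφm, hφ0, hφz⟩ := hφ
  set u : ℕ → X := fun n => T^[n] x with hu
  have hu' : ∀ n, u (n+1) = T (u n) := fun n => Function.iterate_succ_apply' T n x
  set D : ℕ → ℝ := fun n => dist (u n) (u (n+1)) with hD
  obtain ⟨hanti0, hD00⟩ :=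
    orbit_dist_tendsto_zero (T := T) ⟨hφc, hφm, hφ0, hφz⟩ ha hb hc hψsub hψbw hcontr x
  have hanti : Antitone D := hanti0
  have hD0 : Tendsto D atTop (𝓝 0) := hD00
  by_cases htriv : ∃ n, u n = u (n+1)
  · obtain ⟨n, hn⟩ := htriv
    have hconst : ∀ m, n ≤ m → u m = u n := by
      intro m hm
      induction m, hm using Nat.le_induction with
      | base => rfl
      | succ m hm ih =>
        calc u (m+1) = T (u m) := hu' m
          _ = T (u n) := by rw [ih]
          _ = u (n+1) := (hu' n).symm
          _ = u n := hn.symm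
    exact (tendsto_atTop_of_eventually_const hconst).cauchySeq
  rw [Metric.cauchySeq_iff]
  by_contra hnc
  push_neg at hnc
  obtain ⟨ε, hε, hnc⟩ := hnc
  have key : ∀ k : ℕ, ∃ n m : ℕ, k ≤ n ∧ n < m ∧ ε ≤ dist (u n) (u m) ∧
      dist (u n) (u (m-1)) < ε := by
    intro k
    obtain ⟨i, hi, j, hj, hij⟩ := hnc k
    have hij' : i ≠ j := by
      intro h
      rw [h, dist_self] at hij
      linarith
    have hex : ∃ m, min i j < m ∧ ε ≤ dist (u (min i j)) (u m) := by
      refine ⟨max i j, min_lt_max.2 hij', ?_⟩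
      rcases le_total i j with h | h
      · rw [min_eq_left h, max_eq_right h]; exact hij
      · rw [min_eq_right h, max_eq_left h, dist_comm]; exact hij
    set m := Nat.find hex with hm
    have hms := Nat.find_spec hex
    refine ⟨min i j, m, le_min hi hj, hms.1, hms.2, ?_⟩
    rcases Nat.lt_or_ge (min i j) (m-1) with h | h
    · have hmin := Nat.find_min hex (show m - 1 < m by have := hms.1; omega)
      simp only [not_and, not_le] at hmin
      exact hmin h
    · have heq : m - 1 = min i j := by have := hms.1; omega
      rw [heq, dist_self]
      exact hε
  choose nf mf hkn hnm hrge0 hrlt using key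
  set r : ℕ → ℝ := fun k => dist (u (nf k)) (u (mf k)) with hrdef
  have hrge : ∀ k, ε ≤ r k := hrge0
  have hrle : ∀ k, r k ≤ ε + D k := by
    intro k
    have h1 : r k ≤ dist (u (nf k)) (u (mf k - 1)) + dist (u (mf k - 1)) (u (mf k)) :=
      dist_triangle _ _ _
    have h2 : (mf k - 1) + 1 = mf k := by have := hnm k; omega
    have h3 : D (mf k - 1) = dist (u (mf k - 1)) (u (mf k)) := by
      show dist (u (mf k - 1)) (u ((mf k - 1) + 1)) = _
      rw [h2]
    have h4 : D (mf k - 1) ≤ D k := hanti (by have := hkn k; have := hnm k; omega)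
    have h5 := hrlt k
    linarith
  have hrt : Tendsto r atTop (𝓝 ε) := by
    have h2 : Tendsto (fun k => ε + D k) atTop (𝓝 ε) := by
      simpa using tendsto_const_nhds.add hD0
    exact tendsto_of_tendsto_of_tendsto_of_le_of_le tendsto_const_nhds h2 hrge hrle
  set ψ : ℝ → ℝ := fun s => a s + 2 * b s + c s with hψdef
  have hψε : ψ ε < 1 := hψsub ε hε
  have hls : limsup ψ (𝓝[>] ε) < 1 := hψbw ε hε
  set K : ℝ := max (ψ ε) ((limsup ψ (𝓝[>] ε) + 1) / 2) with hK
  have hK1 : K < 1 := max_lt hψε (by linarith)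
  have hbound : IsBoundedUnder (· ≤ ·) (𝓝[>] ε) ψ := by
    refine ⟨1, ?_⟩
    rw [Filter.eventually_map]
    filter_upwards [self_mem_nhdsWithin] with t ht
    exact le_of_lt (hψsub t (lt_trans hε ht))
  have hev : ∀ᶠ t in 𝓝[>] ε, ψ t < (limsup ψ (𝓝[>] ε) + 1) / 2 :=
    eventually_lt_of_limsup_lt (by linarith) hbound
  obtain ⟨w, hw, hsub⟩ := mem_nhdsGT_iff_exists_Ioo_subset.1 hev
  have hrw : ∀ᶠ k in atTop, r k < w := hrt.eventually_lt_const hw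
  have hψr : ∀ᶠ k in atTop, ψ (r k) ≤ K := by
    filter_upwards [hrw] with k hk
    rcases eq_or_lt_of_le (hrge k) with h | h
    · rw [show r k = ε from h.symm]; exact le_max_left _ _
    · exact le_trans (le_of_lt (hsub ⟨h, hk⟩)) (le_max_right _ _)
  have hmain : ∀ᶠ k in atTop, φ (max 0 (ε - 2 * D k)) ≤ K * φ (r k + D k) := by
    filter_upwards [hψr] with k hk
    have hne : u (nf k) ≠ u (mf k) := by
      intro h
      have h0 := hrge k
      rw [show r k = dist (u (nf k)) (u (mf k)) from rfl, h, dist_self] at h0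
      linarith
    have keyc := hcontr (u (nf k)) (u (mf k)) hne
    simp only [eAlt] at keyc
    rw [← hu' (nf k), ← hu' (mf k)] at keyc
    have e1 : dist (u (nf k)) (u (mf k)) = r k := rfl
    have e2 : dist (u (nf k)) (u (nf k + 1)) = D (nf k) := rfl
    have e3 : dist (u (mf k)) (u (mf k + 1)) = D (mf k) := rfl
    rw [e1, e2, e3] at keyc
    have hDk0 : 0 ≤ D k := dist_nonneg
    have hrk0 : (0:ℝ) ≤ r k := dist_nonneg
    have hrD0 : (0:ℝ) ≤ r k + D k := by linarith
    have hDnn : ∀ n, 0 ≤ D n := fun n => dist_nonneg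
    have hDn : D (nf k) ≤ D k := hanti (hkn k)
    have hDm : D (mf k) ≤ D k := hanti (le_trans (hkn k) (le_of_lt (hnm k)))
    have hp1 : φ (r k) ≤ φ (r k + D k) := hφm hrk0 hrD0 (by linarith)
    have hp2 : φ (D (nf k)) ≤ φ (r k + D k) := hφm (hDnn _) hrD0 (by linarith)
    have hp3 : φ (D (mf k)) ≤ φ (r k + D k) := hφm (hDnn _) hrD0 (by linarith)
    have hmin1 : dist (u (nf k)) (u (mf k + 1)) ≤ r k + D k := by
      have ht := dist_triangle (u (nf k)) (u (mf k)) (u (mf k + 1))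
      rw [e1, e3] at ht
      linarith
    have hp4 : min (φ (dist (u (nf k)) (u (mf k + 1)))) (φ (dist (u (nf k + 1)) (u (mf k)))) ≤
        φ (r k + D k) :=
      le_trans (min_le_left _ _) (hφm dist_nonneg hrD0 hmin1)
    have hmin0 : 0 ≤ min (φ (dist (u (nf k)) (u (mf k + 1)))) (φ (dist (u (nf k + 1)) (u (mf k)))) :=
      le_min (hφ0 _ dist_nonneg) (hφ0 _ dist_nonneg)
    have hA := ha (r k) hrk0
    have hB := hb (r k) hrk0
    have hC := hc (r k) hrk0
    have hφrD : 0 ≤ φ (r k + D k) := hφ0 _ hrD0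
    have hrhs : φ (dist (u (nf k + 1)) (u (mf k + 1))) ≤ ψ (r k) * φ (r k + D k) := by
      have h1 : a (r k) * φ (r k) ≤ a (r k) * φ (r k + D k) :=
        mul_le_mul_of_nonneg_left hp1 hA
      have h2 : b (r k) * (φ (D (nf k)) + φ (D (mf k))) ≤ b (r k) * (2 * φ (r k + D k)) :=
        mul_le_mul_of_nonneg_left (by linarith) hB
      have h3 : c (r k) * min (φ (dist (u (nf k)) (u (mf k + 1)))) (φ (dist (u (nf k + 1)) (u (mf k)))) ≤
          c (r k) * φ (r k + D k) :=
        mul_le_mul_of_nonneg_left hp4 hC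
      have hψexp : ψ (r k) = a (r k) + 2 * b (r k) + c (r k) := rfl
      rw [hψexp]
      nlinarith [keyc]
    have hlhs : φ (max 0 (ε - 2 * D k)) ≤ φ (dist (u (nf k + 1)) (u (mf k + 1))) := by
      refine hφm (Set.mem_Ici.2 (le_max_left _ _)) dist_nonneg (max_le dist_nonneg ?_)
      have ht1 := dist_triangle (u (nf k)) (u (nf k + 1)) (u (mf k))
      have ht2 := dist_triangle (u (nf k + 1)) (u (mf k + 1)) (u (mf k))
      have ht3 : dist (u (mf k + 1)) (u (mf k)) = D (mf k) := by
        rw [dist_comm]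
      have h0 := hrge k
      rw [e1] at ht1
      rw [e2] at ht1
      rw [ht3] at ht2
      linarith
    calc φ (max 0 (ε - 2 * D k)) ≤ φ (dist (u (nf k + 1)) (u (mf k + 1))) := hlhs
      _ ≤ ψ (r k) * φ (r k + D k) := hrhs
      _ ≤ K * φ (r k + D k) := mul_le_mul_of_nonneg_right hk hφrD
  have hl1 : Tendsto (fun k => φ (max 0 (ε - 2 * D k))) atTop (𝓝 (φ ε)) := by
    have h1 : Tendsto (fun k => ε - 2 * D k) atTop (𝓝 ε) := by
      simpa using tendsto_const_nhds.sub (hD0.const_mul 2)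
    have hin : Tendsto (fun k => max 0 (ε - 2 * D k)) atTop (𝓝 ε) := by
      have := (tendsto_const_nhds : Tendsto (fun _ : ℕ => (0:ℝ)) atTop (𝓝 0)).max h1
      simpa [max_eq_right hε.le] using this
    exact tendsto_phi_aux hφc hε.le hin fun k => le_max_left _ _
  have hl2 : Tendsto (fun k => K * φ (r k + D k)) atTop (𝓝 (K * φ ε)) := by
    have hin : Tendsto (fun k => r k + D k) atTop (𝓝 ε) := by
      simpa using hrt.add hD0
    exact (tendsto_phi_aux hφc hε.le hin fun k =>
      add_nonneg dist_nonneg dist_nonneg).const_mul K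
  have hfin : φ ε ≤ K * φ ε := le_of_tendsto_of_tendsto hl1 hl2 hmain
  have hφε : 0 < φ ε := by
    rcases lt_or_eq_of_le (hφ0 ε hε.le) with h | h
    · exact h
    · exact absurd ((hφz ε hε.le).1 h.symm) (ne_of_gt hε)
  nlinarith
end

section
variable {X : Type*} [MetricSpace X] {T : X → X} {φ a b c : ℝ → ℝ}

private lemma limit_is_fixed (hφ : IsAltering φ)
    (ha : ∀ s, 0 ≤ s → 0 ≤ a s) (hb : ∀ s, 0 ≤ s → 0 ≤ b s)
    (hc : ∀ s, 0 ≤ s → 0 ≤ c s)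
    (hψsub : StrictlySubunitary (fun s => a s + 2 * b s + c s))
    (hψbw : RightBoydWong (fun s => a s + 2 * b s + c s))
    (hcontr : ∀ x y : X, x ≠ y →
      eAlt φ (T x) (T y) ≤ a (dist x y) * eAlt φ x y
        + b (dist x y) * (eAlt φ x (T x) + eAlt φ y (T y))
        + c (dist x y) * min (eAlt φ x (T y)) (eAlt φ (T x) y))
    {x : X} {z : X} (hz : Tendsto (fun n : ℕ => T^[n] x) atTop (𝓝 z)) :
    z = T z := by
  obtain ⟨hφc, hφm, hφ0, hφz⟩ := hφ
  have hphi0 : φ 0 = 0 := (hφz 0 le_rfl).2 rfl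
  set u : ℕ → X := fun n => T^[n] x with hu
  have hu' : ∀ n, u (n+1) = T (u n) := fun n => Function.iterate_succ_apply' T n x
  set D : ℕ → ℝ := fun n => dist (u n) (u (n+1)) with hD
  obtain ⟨hanti0, hD00⟩ :=
    orbit_dist_tendsto_zero (T := T) ⟨hφc, hφm, hφ0, hφz⟩ ha hb hc hψsub hψbw hcontr x
  have hD0 : Tendsto D atTop (𝓝 0) := hD00
  set s : ℕ → ℝ := fun n => dist (u n) z with hs
  have hs0 : Tendsto s atTop (𝓝 0) := by
    have := tendsto_iff_dist_tendsto_zero.1 hz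
    exact this
  by_cases hfreq : ∃ᶠ n in atTop, u n = z
  · -- T z occurs as a limit point of the orbit
    have hdz : ∀ η : ℝ, 0 < η → dist (T z) z < η := by
      intro η hη
      have hev : ∀ᶠ n in atTop, dist (u (n+1)) z < η := by
        have := (Metric.tendsto_atTop.1 hz) η hη
        obtain ⟨N, hN⟩ := this
        exact eventually_atTop.2 ⟨N, fun n hn => hN (n+1) (by omega)⟩
      obtain ⟨n, hn1, hn2⟩ := (hfreq.and_eventually hev).exists
      rw [← hn1] at *
      calc dist (T (u n)) (u n) = dist (u (n+1)) (u n) := by rw [hu' n]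
        _ < η := by rw [dist_comm] at hn2 ⊢; exact hn2
    have hdz0 : dist (T z) z = 0 := by
      by_contra hne
      have hpos : 0 < dist (T z) z := lt_of_le_of_ne dist_nonneg (Ne.symm hne)
      exact lt_irrefl _ (hdz _ hpos)
    exact (eq_of_dist_eq_zero hdz0).symm
  · rw [Filter.not_frequently] at hfreq
    -- eventually u n ≠ z
    have hev : ∀ᶠ n in atTop, φ (max 0 (dist z (T z) - s (n+1))) ≤
        φ (s n) + (φ (D n) + φ (dist z (T z))) / 2 + φ (s (n+1)) := by
      filter_upwards [hfreq] with n hn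
      have keyc := hcontr (u n) z hn
      simp only [eAlt] at keyc
      rw [← hu' n] at keyc
      have e1 : dist (u n) z = s n := rfl
      have e2 : dist (u n) (u (n+1)) = D n := rfl
      rw [e1, e2] at keyc
      have hsn0 : 0 < s n := dist_pos.2 hn
      have hA := ha (s n) hsn0.le
      have hB := hb (s n) hsn0.le
      have hC := hc (s n) hsn0.le
      have hψs : a (s n) + 2 * b (s n) + c (s n) < 1 := hψsub (s n) hsn0
      have hφsn : 0 ≤ φ (s n) := hφ0 _ dist_nonneg
      have hφDn : 0 ≤ φ (D n) := hφ0 _ dist_nonneg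
      have hφρ : 0 ≤ φ (dist z (T z)) := hφ0 _ dist_nonneg
      -- bound each term
      have t1 : a (s n) * φ (s n) ≤ φ (s n) := by nlinarith
      have t2 : b (s n) * (φ (D n) + φ (dist z (T z))) ≤
          (φ (D n) + φ (dist z (T z))) / 2 := by nlinarith
      have hminle : min (φ (dist (u n) (T z))) (φ (dist (u (n+1)) z)) ≤ φ (s (n+1)) :=
        min_le_right _ _
      have hmin0 : 0 ≤ min (φ (dist (u n) (T z))) (φ (dist (u (n+1)) z)) :=
        le_min (hφ0 _ dist_nonneg) (hφ0 _ dist_nonneg)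
      have hφsn1 : 0 ≤ φ (s (n+1)) := hφ0 _ dist_nonneg
      have t3 : c (s n) * min (φ (dist (u n) (T z))) (φ (dist (u (n+1)) z)) ≤ φ (s (n+1)) := by
        nlinarith
      have hlhs : φ (max 0 (dist z (T z) - s (n+1))) ≤ φ (dist (u (n+1)) (T z)) := by
        refine hφm (Set.mem_Ici.2 (le_max_left _ _)) dist_nonneg (max_le dist_nonneg ?_)
        have := dist_triangle z (u (n+1)) (T z)
        have e3 : dist z (u (n+1)) = s (n+1) := dist_comm z (u (n+1)) ▸ rfl
        rw [e3] at this
        linarith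
      linarith
    have hl1 : Tendsto (fun n => φ (max 0 (dist z (T z) - s (n+1)))) atTop
        (𝓝 (φ (dist z (T z)))) := by
      have h1 : Tendsto (fun n => dist z (T z) - s (n+1)) atTop (𝓝 (dist z (T z))) := by
        simpa using tendsto_const_nhds.sub (hs0.comp (tendsto_add_atTop_nat 1))
      have hin : Tendsto (fun n => max 0 (dist z (T z) - s (n+1))) atTop (𝓝 (dist z (T z))) := by
        have := (tendsto_const_nhds : Tendsto (fun _ : ℕ => (0:ℝ)) atTop (𝓝 0)).max h1
        simpa [max_eq_right dist_nonneg] using this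
      exact tendsto_phi_aux hφc dist_nonneg hin fun n => le_max_left _ _
    have hl2 : Tendsto (fun n => φ (s n) + (φ (D n) + φ (dist z (T z))) / 2 + φ (s (n+1)))
        atTop (𝓝 (0 + (0 + φ (dist z (T z))) / 2 + 0)) := by
      have c1 : Tendsto (fun n => φ (s n)) atTop (𝓝 (φ 0)) :=
        tendsto_phi_aux hφc le_rfl hs0 fun n => dist_nonneg
      have c2 : Tendsto (fun n => φ (D n)) atTop (𝓝 (φ 0)) :=
        tendsto_phi_aux hφc le_rfl hD0 fun n => dist_nonneg
      have c3 : Tendsto (fun n => φ (s (n+1))) atTop (𝓝 (φ 0)) :=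
        tendsto_phi_aux hφc le_rfl (hs0.comp (tendsto_add_atTop_nat 1)) fun n => dist_nonneg
      rw [hphi0] at c1 c2 c3
      exact (c1.add ((c2.add tendsto_const_nhds).div_const 2)).add c3
    have hfin : φ (dist z (T z)) ≤ 0 + (0 + φ (dist z (T z))) / 2 + 0 :=
      le_of_tendsto_of_tendsto hl1 hl2 hev
    have : φ (dist z (T z)) ≤ 0 := by linarith
    have hzero : φ (dist z (T z)) = 0 := le_antisymm this (hφ0 _ dist_nonneg)
    have := (hφz _ dist_nonneg).1 hzero
    exact dist_eq_zero.1 this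
end


/-- **Theorem 4.** Let `(X,d)` be complete, `φ` an altering function, and
`a, b, c : [0,∞) → [0,∞)` with `ψ := a + 2b + c` strictly subunitary and right
Boyd–Wong on `(0,∞)`. If `T` is `(d,e;a,b,c)`-contractive, then `T` is a
globally strong Picard operator: `Fix(T)` is a singleton `{z}` and every orbit
`Tⁿx` converges to `z`. -/
theorem abc_contraction_globally_strong_picard {X : Type*}
    [MetricSpace X] [CompleteSpace X] [Nonempty X]
    (T : X → X) (φ a b c : ℝ → ℝ) (hφ : IsAltering φ)
    (ha : ∀ s, 0 ≤ s → 0 ≤ a s) (hb : ∀ s, 0 ≤ s → 0 ≤ b s)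
    (hc : ∀ s, 0 ≤ s → 0 ≤ c s)
    (hψsub : StrictlySubunitary (fun s => a s + 2 * b s + c s))
    (hψbw : RightBoydWong (fun s => a s + 2 * b s + c s))
    (hcontr : ∀ x y : X, x ≠ y →
      eAlt φ (T x) (T y) ≤ a (dist x y) * eAlt φ x y
        + b (dist x y) * (eAlt φ x (T x) + eAlt φ y (T y))
        + c (dist x y) * min (eAlt φ x (T y)) (eAlt φ (T x) y)) :
    ∃ z : X, z = T z ∧ (∀ y : X, y = T y → y = z) ∧
      ∀ x : X, Tendsto (fun n : ℕ => T^[n] x) atTop (𝓝 z) := by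
  obtain ⟨hφc, hφm, hφ0, hφz⟩ := hφ
  have hphi0 : φ 0 = 0 := (hφz 0 le_rfl).2 rfl
  -- uniqueness of fixed points
  have huniq : ∀ y w : X, y = T y → w = T w → y = w := by
    intro y w hy hw
    by_contra hne
    have hδ : 0 < dist y w := dist_pos.2 hne
    have keyc := hcontr y w hne
    rw [show T y = y from hy.symm, show T w = w from hw.symm] at keyc
    simp only [eAlt, dist_self, hphi0, min_self] at keyc
    have hψs : a (dist y w) + 2 * b (dist y w) + c (dist y w) < 1 := hψsub _ hδ
    have hφd : 0 < φ (dist y w) := by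
      rcases lt_or_eq_of_le (hφ0 (dist y w) dist_nonneg) with h | h
      · exact h
      · exact absurd ((hφz (dist y w) dist_nonneg).1 h.symm) (ne_of_gt hδ)
    have hB := hb (dist y w) hδ.le
    nlinarith
  -- existence via an orbit of a basepoint
  obtain ⟨x₀⟩ := ‹Nonempty X›
  obtain ⟨z, hz⟩ := cauchySeq_tendsto_of_complete
    (orbit_cauchy ⟨hφc, hφm, hφ0, hφz⟩ ha hb hc hψsub hψbw hcontr x₀)
  have hzfix : z = T z :=
    limit_is_fixed ⟨hφc, hφm, hφ0, hφz⟩ ha hb hc hψsub hψbw hcontr hz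
  refine ⟨z, hzfix, fun y hy => huniq y z hy hzfix, fun x => ?_⟩
  obtain ⟨z', hz'⟩ := cauchySeq_tendsto_of_complete
    (orbit_cauchy ⟨hφc, hφm, hφ0, hφz⟩ ha hb hc hψsub hψbw hcontr x)
  have hz'fix : z' = T z' :=
    limit_is_fixed ⟨hφc, hφm, hφ0, hφz⟩ ha hb hc hψsub hψbw hcontr hz'
  rwa [huniq z' z hz'fix hzfix] at hz'
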